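/- Let S, V, X₁, X₂, Y be jointly distributed random variables taking values in finite sets such that the pair (X₁,X₂) is independent of S and V ↔ (S,X₁,X₂) ↔ Y is a Markov chain, i.e., I(V ; Y | S,X₁,X₂) = 0. Then I(V,X₁,X₂ ; Y) - I(V,X₁,X₂ ; S) = I(X₁,X₂ ; Y) - I(V ; S | X₁,X₂,Y); in particular I(V,X₁,X₂ ; Y) - I(V,X₁,X₂ ; S) ≤ I(X₁,X₂ ; Y), so the sum-rate bound of the outer bound of Theorem 2 is at least as tight as that of Proposition 1. -/

import Mathlib

open scoped BigOperators
open Classical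

noncomputable section

/-- Probability that the random variable `X` equals `x` under the pmf `p`. -/
def pr {Ω α : Type*} [Fintype Ω] (p : Ω → ℝ) (X : Ω → α) (x : α) : ℝ :=
  ∑ ω : Ω, if X ω = x then p ω else 0

/-- Shannon entropy (in bits), with the convention `0 · log₂ 0 = 0`. -/
def ent {Ω α : Type*} [Fintype Ω] (p : Ω → ℝ) (X : Ω → α) : ℝ :=
  -∑ x ∈ Finset.univ.image X, pr p X x * Real.logb 2 (pr p X x)

/-- Conditional entropy `H(X|Y) = H(X,Y) - H(Y)`. -/
def condEnt {Ω α β : Type*} [Fintype Ω] (p : Ω → ℝ) (X : Ω → α) (Y : Ω → β) : ℝ :=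
  ent p (fun ω => (X ω, Y ω)) - ent p Y

/-- Mutual information `I(X;Y) = H(X) + H(Y) - H(X,Y)`. -/
def mi {Ω α β : Type*} [Fintype Ω] (p : Ω → ℝ) (X : Ω → α) (Y : Ω → β) : ℝ :=
  ent p X + ent p Y - ent p (fun ω => (X ω, Y ω))

/-- Conditional mutual information `I(X;Y|Z) = H(X,Z) + H(Y,Z) - H(X,Y,Z) - H(Z)`. -/
def cmi {Ω α β γ : Type*} [Fintype Ω] (p : Ω → ℝ) (X : Ω → α) (Y : Ω → β) (Z : Ω → γ) : ℝ :=
  ent p (fun ω => (X ω, Z ω)) + ent p (fun ω => (Y ω, Z ω))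
    - ent p (fun ω => (X ω, Y ω, Z ω)) - ent p Z

/-- `p` is a probability mass function on the finite sample space `Ω`. -/
def IsPMF {Ω : Type*} [Fintype Ω] (p : Ω → ℝ) : Prop :=
  (∀ ω, 0 ≤ p ω) ∧ ∑ ω : Ω, p ω = 1

/-- The random variables `X` and `Y` are independent under `p`. -/
def IndepRV {Ω α β : Type*} [Fintype Ω] (p : Ω → ℝ) (X : Ω → α) (Y : Ω → β) : Prop :=
  ∀ x y, pr p (fun ω => (X ω, Y ω)) (x, y) = pr p X x * pr p Y y

end

section helpers
variable {Ω α β γ : Type*} [Fintype Ω]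

theorem pr_nonneg (p : Ω → ℝ) (hp : ∀ ω, 0 ≤ p ω) (X : Ω → α) (x : α) : 0 ≤ pr p X x :=
  Finset.sum_nonneg fun ω _ => by split <;> simp [hp ω]

theorem sum_pr [Fintype α] (p : Ω → ℝ) (X : Ω → α) : ∑ x : α, pr p X x = ∑ ω, p ω := by
  unfold pr
  rw [Finset.sum_comm]
  exact Finset.sum_congr rfl fun ω _ => by simp

theorem pr_fst [Fintype β] (p : Ω → ℝ) (X : Ω → α) (Y : Ω → β) (x : α) :
    pr p X x = ∑ y : β, pr p (fun ω => (X ω, Y ω)) (x, y) := by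
  unfold pr
  rw [Finset.sum_comm]
  refine Finset.sum_congr rfl fun ω _ => ?_
  simp [Prod.ext_iff, ite_and]

theorem pr_snd [Fintype α] (p : Ω → ℝ) (X : Ω → α) (Y : Ω → β) (y : β) :
    pr p Y y = ∑ x : α, pr p (fun ω => (X ω, Y ω)) (x, y) := by
  unfold pr
  rw [Finset.sum_comm]
  refine Finset.sum_congr rfl fun ω _ => ?_
  simp [Prod.ext_iff, ite_and]

theorem pr_mid [Fintype β] (p : Ω → ℝ) (A : Ω → α) (B : Ω → β) (C : Ω → γ) (a : α) (c : γ) :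
    pr p (fun ω => (A ω, C ω)) (a, c) = ∑ b : β, pr p (fun ω => (A ω, B ω, C ω)) (a, b, c) := by
  unfold pr
  rw [Finset.sum_comm]
  refine Finset.sum_congr rfl fun ω _ => ?_
  simp [Prod.ext_iff, ite_and]

theorem pr_eq_zero_of_not_mem (p : Ω → ℝ) (X : Ω → α) (x : α)
    (hx : x ∉ Finset.univ.image X) : pr p X x = 0 := by
  refine Finset.sum_eq_zero fun ω _ => ?_
  have : X ω ≠ x := fun h => hx (Finset.mem_image.2 ⟨ω, Finset.mem_univ ω, h⟩)
  simp [this]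

theorem ent_eq_sum_univ [Fintype α] (p : Ω → ℝ) (X : Ω → α) :
    ent p X = -∑ x : α, pr p X x * Real.logb 2 (pr p X x) := by
  unfold ent
  congr 1
  refine Finset.sum_subset (Finset.subset_univ _) fun x _ hx => ?_
  rw [pr_eq_zero_of_not_mem p X x hx]; simp

theorem ent_comp_inj (p : Ω → ℝ) (X : Ω → α) (f : α → β) (hf : Function.Injective f) :
    ent p (fun ω => f (X ω)) = ent p X := by
  unfold ent
  have hpr : ∀ x, pr p (fun ω => f (X ω)) (f x) = pr p X x := fun x =>
    Finset.sum_congr rfl fun ω _ => by simp [hf.eq_iff]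
  have himg : Finset.univ.image (fun ω => f (X ω)) = (Finset.univ.image X).image f := by
    ext b; simp [Finset.mem_image]
  rw [himg, Finset.sum_image (fun a _ b _ h => hf h)]
  exact congrArg Neg.neg (Finset.sum_congr rfl fun x _ => by rw [hpr])

end helpers

section hard
variable {Ω α β γ : Type*} [Fintype Ω]

theorem ent_pair_indep [Fintype α] [Fintype β] (p : Ω → ℝ) (hp : IsPMF p)
    (X : Ω → α) (Y : Ω → β) (h : IndepRV p X Y) :
    ent p (fun ω => (X ω, Y ω)) = ent p X + ent p Y := by
  have hX : ∑ x : α, pr p X x = 1 := by rw [sum_pr, hp.2]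
  have hY : ∑ y : β, pr p Y y = 1 := by rw [sum_pr, hp.2]
  rw [ent_eq_sum_univ, ent_eq_sum_univ p X, ent_eq_sum_univ p Y, Fintype.sum_prod_type]
  have key : ∀ x y, pr p (fun ω => (X ω, Y ω)) (x, y)
        * Real.logb 2 (pr p (fun ω => (X ω, Y ω)) (x, y))
      = pr p Y y * (pr p X x * Real.logb 2 (pr p X x))
        + pr p X x * (pr p Y y * Real.logb 2 (pr p Y y)) := by
    intro x y
    rw [h x y]
    by_cases hx : pr p X x = 0
    · simp [hx]
    by_cases hy : pr p Y y = 0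
    · simp [hy]
    rw [Real.logb, Real.logb, Real.logb, Real.log_mul hx hy]
    ring
  rw [Finset.sum_congr rfl fun x _ => Finset.sum_congr rfl fun y _ => key x y]
  simp only [Finset.sum_add_distrib, ← Finset.sum_mul, ← Finset.mul_sum, hX, hY]
  ring

end hard

section cmi_nn
variable {Ω α β γ : Type*} [Fintype Ω]

theorem cmi_nonneg_ent [Fintype α] [Fintype β] [Fintype γ] (p : Ω → ℝ) (hp : IsPMF p)
    (A : Ω → α) (B : Ω → β) (C : Ω → γ) :
    0 ≤ ent p (fun ω => (A ω, C ω)) + ent p (fun ω => (B ω, C ω))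
        - ent p (fun ω => (A ω, B ω, C ω)) - ent p C := by
  have hpn := hp.1
  have hlog2 : (0:ℝ) < Real.log 2 := Real.log_pos one_lt_two
  rw [ent_eq_sum_univ p (fun ω => (A ω, C ω)), ent_eq_sum_univ p (fun ω => (B ω, C ω)),
    ent_eq_sum_univ p (fun ω => (A ω, B ω, C ω)), ent_eq_sum_univ p C]
  simp only [Fintype.sum_prod_type]
  set q : α × β × γ → ℝ := pr p (fun ω => (A ω, B ω, C ω)) with hqdef
  set pac : α × γ → ℝ := pr p (fun ω => (A ω, C ω)) with hpacdef
  set pbc : β × γ → ℝ := pr p (fun ω => (B ω, C ω)) with hpbcdef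
  set pc : γ → ℝ := pr p C with hpcdef
  have hq0 : ∀ z, 0 ≤ q z := fun z => pr_nonneg p hpn _ z
  have hpac0 : ∀ w, 0 ≤ pac w := fun w => pr_nonneg p hpn _ w
  have hpbc0 : ∀ w, 0 ≤ pbc w := fun w => pr_nonneg p hpn _ w
  have hpc0 : ∀ c, 0 ≤ pc c := fun c => pr_nonneg p hpn _ c
  have hmac : ∀ a c, pac (a, c) = ∑ b : β, q (a, b, c) := fun a c => pr_mid p A B C a c
  have hmbc : ∀ b c, pbc (b, c) = ∑ a : α, q (a, b, c) := fun b c =>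
    pr_snd p A (fun ω => (B ω, C ω)) (b, c)
  have hmc : ∀ c, pc c = ∑ a : α, pac (a, c) := fun c => pr_snd p A C c
  have hmc2 : ∀ c, pc c = ∑ b : β, pbc (b, c) := fun c => pr_snd p B C c
  have hqle_ac : ∀ a b c, q (a, b, c) ≤ pac (a, c) := fun a b c => by
    rw [hmac]; exact Finset.single_le_sum (f := fun b => q (a, b, c)) (fun b _ => hq0 _) (Finset.mem_univ b)
  have hqle_bc : ∀ a b c, q (a, b, c) ≤ pbc (b, c) := fun a b c => by
    rw [hmbc]; exact Finset.single_le_sum (f := fun a => q (a, b, c)) (fun a _ => hq0 _) (Finset.mem_univ a)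
  have hqle_c : ∀ a b c, q (a, b, c) ≤ pc c := fun a b c =>
    (hqle_ac a b c).trans (by
      rw [hmc]; exact Finset.single_le_sum (f := fun a => pac (a, c)) (fun a _ => hpac0 _) (Finset.mem_univ a))
  have hsumq : ∑ a : α, ∑ b : β, ∑ c : γ, q (a, b, c) = 1 := by
    have h := sum_pr p (fun ω => (A ω, B ω, C ω))
    rw [hp.2] at h
    simpa [Fintype.sum_prod_type] using h
  have hsumc : ∑ c : γ, pc c = 1 := by
    have h := sum_pr p C; rw [hp.2] at h; exact h
  -- rewrite the four entropy sums as triple sums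
  have S1 : ∑ a : α, ∑ b : β, ∑ c : γ, q (a, b, c) * Real.logb 2 (pac (a, c))
      = ∑ a : α, ∑ c : γ, pac (a, c) * Real.logb 2 (pac (a, c)) := by
    refine Finset.sum_congr rfl fun a _ => ?_
    rw [Finset.sum_comm]
    refine Finset.sum_congr rfl fun c _ => ?_
    rw [← Finset.sum_mul, ← hmac]
  have S2 : ∑ a : α, ∑ b : β, ∑ c : γ, q (a, b, c) * Real.logb 2 (pbc (b, c))
      = ∑ b : β, ∑ c : γ, pbc (b, c) * Real.logb 2 (pbc (b, c)) := by
    rw [Finset.sum_comm]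
    refine Finset.sum_congr rfl fun b _ => ?_
    rw [Finset.sum_comm]
    refine Finset.sum_congr rfl fun c _ => ?_
    rw [← Finset.sum_mul, ← hmbc]
  have S3 : ∑ a : α, ∑ b : β, ∑ c : γ, q (a, b, c) * Real.logb 2 (pc c)
      = ∑ c : γ, pc c * Real.logb 2 (pc c) := by
    rw [Finset.sum_congr rfl fun a _ => Finset.sum_comm (s := Finset.univ) (t := Finset.univ)
      (f := fun b c => q (a, b, c) * Real.logb 2 (pc c)), Finset.sum_comm]
    refine Finset.sum_congr rfl fun c _ => ?_
    simp only [← Finset.sum_mul]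
    congr 1
    rw [hmc]
    exact Finset.sum_congr rfl fun a _ => (hmac a c).symm
  rw [← S1, ← S2, ← S3]
  have goal_eq : -(∑ a : α, ∑ b : β, ∑ c : γ, q (a, b, c) * Real.logb 2 (pac (a, c)))
        + -(∑ a : α, ∑ b : β, ∑ c : γ, q (a, b, c) * Real.logb 2 (pbc (b, c)))
        - -(∑ a : α, ∑ b : β, ∑ c : γ, q (a, b, c) * Real.logb 2 (q (a, b, c)))
        - -(∑ a : α, ∑ b : β, ∑ c : γ, q (a, b, c) * Real.logb 2 (pc c))
      = ∑ a : α, ∑ b : β, ∑ c : γ, q (a, b, c) *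
          (Real.logb 2 (q (a, b, c)) + Real.logb 2 (pc c)
            - Real.logb 2 (pac (a, c)) - Real.logb 2 (pbc (b, c))) := by
    simp only [mul_add, mul_sub, Finset.sum_add_distrib, Finset.sum_sub_distrib]
    ring
  rw [goal_eq]
  -- pointwise lower bound
  have hpt : ∀ a b c,
      (q (a, b, c) - (if 0 < q (a, b, c) then pac (a, c) * pbc (b, c) / pc c else 0))
          / Real.log 2
        ≤ q (a, b, c) * (Real.logb 2 (q (a, b, c)) + Real.logb 2 (pc c)
            - Real.logb 2 (pac (a, c)) - Real.logb 2 (pbc (b, c))) := by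
    intro a b c
    by_cases hq : 0 < q (a, b, c)
    · have hac : 0 < pac (a, c) := lt_of_lt_of_le hq (hqle_ac a b c)
      have hbc : 0 < pbc (b, c) := lt_of_lt_of_le hq (hqle_bc a b c)
      have hc : 0 < pc c := lt_of_lt_of_le hq (hqle_c a b c)
      rw [if_pos hq]
      have hu : 0 < pac (a, c) * pbc (b, c) / (q (a, b, c) * pc c) := by positivity
      have hlog := Real.log_le_sub_one_of_pos hu
      rw [Real.log_div (by positivity) (by positivity),
        Real.log_mul (ne_of_gt hac) (ne_of_gt hbc),
        Real.log_mul (ne_of_gt hq) (ne_of_gt hc)] at hlog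
      have h1 : q (a, b, c) * (pac (a, c) * pbc (b, c) / (q (a, b, c) * pc c))
          = pac (a, c) * pbc (b, c) / pc c := by
        field_simp
      have hnum : q (a, b, c) - pac (a, c) * pbc (b, c) / pc c
          ≤ q (a, b, c) * (Real.log (q (a, b, c)) + Real.log (pc c)
              - Real.log (pac (a, c)) - Real.log (pbc (b, c))) := by
        nlinarith [mul_le_mul_of_nonneg_left hlog hq.le]
      simp only [Real.logb]
      have h2 : q (a, b, c) * (Real.log (q (a, b, c)) / Real.log 2
            + Real.log (pc c) / Real.log 2 - Real.log (pac (a, c)) / Real.log 2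
            - Real.log (pbc (b, c)) / Real.log 2)
          = q (a, b, c) * (Real.log (q (a, b, c)) + Real.log (pc c)
              - Real.log (pac (a, c)) - Real.log (pbc (b, c))) / Real.log 2 := by
        ring
      rw [h2]
      exact div_le_div_of_nonneg_right hnum hlog2.le |>.trans_eq rfl
    · have hz : q (a, b, c) = 0 := le_antisymm (not_lt.1 hq) (hq0 _)
      rw [if_neg hq]
      simp [hz]
  refine le_trans ?_ (Finset.sum_le_sum fun a _ => Finset.sum_le_sum fun b _ =>
    Finset.sum_le_sum fun c _ => hpt a b c)
  -- 0 ≤ ∑ (q - s)/log 2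
  have hsum_s : ∑ a : α, ∑ b : β, ∑ c : γ,
      (if 0 < q (a, b, c) then pac (a, c) * pbc (b, c) / pc c else 0) ≤ 1 := by
    have step1 : ∑ a : α, ∑ b : β, ∑ c : γ,
        (if 0 < q (a, b, c) then pac (a, c) * pbc (b, c) / pc c else 0)
        ≤ ∑ a : α, ∑ b : β, ∑ c : γ,
        (if 0 < pc c then pac (a, c) * pbc (b, c) / pc c else 0) := by
      refine Finset.sum_le_sum fun a _ => Finset.sum_le_sum fun b _ =>
        Finset.sum_le_sum fun c _ => ?_
      by_cases hq : 0 < q (a, b, c)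
      · rw [if_pos hq, if_pos (lt_of_lt_of_le hq (hqle_c a b c))]
      · rw [if_neg hq]
        split
        · exact div_nonneg (mul_nonneg (hpac0 _) (hpbc0 _)) (hpc0 _)
        · exact le_refl 0
    refine step1.trans ?_
    have reorder : ∑ a : α, ∑ b : β, ∑ c : γ,
        (if 0 < pc c then pac (a, c) * pbc (b, c) / pc c else 0)
        = ∑ c : γ, ∑ a : α, ∑ b : β,
        (if 0 < pc c then pac (a, c) * pbc (b, c) / pc c else 0) := by
      rw [Finset.sum_congr rfl fun a _ => Finset.sum_comm (s := Finset.univ) (t := Finset.univ)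
        (f := fun b c => if 0 < pc c then pac (a, c) * pbc (b, c) / pc c else 0), Finset.sum_comm]
    rw [reorder]
    have inner : ∀ c : γ, ∑ a : α, ∑ b : β,
        (if 0 < pc c then pac (a, c) * pbc (b, c) / pc c else 0)
        = if 0 < pc c then pc c else 0 := by
      intro c
      by_cases hc : 0 < pc c
      · simp only [if_pos hc]
        have hA : ∀ a, ∑ b : β, pac (a, c) * pbc (b, c) / pc c
            = pac (a, c) * pc c / pc c := by
          intro a
          rw [← Finset.sum_div, ← Finset.mul_sum, ← hmc2]
        rw [Finset.sum_congr rfl fun a _ => hA a, ← Finset.sum_div, ← Finset.sum_mul, ← hmc]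
        field_simp
      · have hz : pc c = 0 := le_antisymm (not_lt.1 hc) (hpc0 c)
        simp [hz]
    rw [Finset.sum_congr rfl fun c _ => inner c]
    calc ∑ c : γ, (if 0 < pc c then pc c else 0) ≤ ∑ c : γ, pc c := by
          refine Finset.sum_le_sum fun c _ => ?_
          split
          · exact le_refl _
          · exact hpc0 c
      _ = 1 := hsumc
  have expand : ∑ a : α, ∑ b : β, ∑ c : γ,
      (q (a, b, c) - (if 0 < q (a, b, c) then pac (a, c) * pbc (b, c) / pc c else 0))
        / Real.log 2
      = (∑ a : α, ∑ b : β, ∑ c : γ, q (a, b, c)) / Real.log 2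
        - (∑ a : α, ∑ b : β, ∑ c : γ,
            (if 0 < q (a, b, c) then pac (a, c) * pbc (b, c) / pc c else 0)) / Real.log 2 := by
    simp only [sub_div, Finset.sum_sub_distrib, Finset.sum_div]
  rw [expand, hsumq]
  have h3 : (∑ a : α, ∑ b : β, ∑ c : γ,
      (if 0 < q (a, b, c) then pac (a, c) * pbc (b, c) / pc c else 0)) / Real.log 2
      ≤ 1 / Real.log 2 := by
    apply div_le_div_of_nonneg_right hsum_s hlog2.le |>.trans_eq rfl
  linarith

end cmi_nn

/-- If `(X₁,X₂)` is independent of `S` and `V ↔ (S,X₁,X₂) ↔ Y` is a Markov chain, then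
`I(V,X₁,X₂ ; Y) - I(V,X₁,X₂ ; S) = I(X₁,X₂ ; Y) - I(V ; S | X₁,X₂,Y)`, and in particular
`I(V,X₁,X₂ ; Y) - I(V,X₁,X₂ ; S) ≤ I(X₁,X₂ ; Y)`. -/
theorem sum_rate_bound_comparison
    {Ω 𝒮 𝒱 𝒳₁ 𝒳₂ 𝒴 : Type*} [Fintype Ω] [Fintype 𝒮] [Fintype 𝒱]
    [Fintype 𝒳₁] [Fintype 𝒳₂] [Fintype 𝒴]
    (p : Ω → ℝ) (hp : IsPMF p)
    (S : Ω → 𝒮) (V : Ω → 𝒱) (X₁ : Ω → 𝒳₁) (X₂ : Ω → 𝒳₂) (Y : Ω → 𝒴)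
    (hIndep : IndepRV p (fun ω => (X₁ ω, X₂ ω)) S)
    (hMarkov : cmi p V Y (fun ω => (S ω, X₁ ω, X₂ ω)) = 0) :
    (mi p (fun ω => (V ω, X₁ ω, X₂ ω)) Y - mi p (fun ω => (V ω, X₁ ω, X₂ ω)) S
        = mi p (fun ω => (X₁ ω, X₂ ω)) Y - cmi p V S (fun ω => (X₁ ω, X₂ ω, Y ω))) ∧
    mi p (fun ω => (V ω, X₁ ω, X₂ ω)) Y - mi p (fun ω => (V ω, X₁ ω, X₂ ω)) S
      ≤ mi p (fun ω => (X₁ ω, X₂ ω)) Y := by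
  have e1 : ent p (fun ω => ((V ω, X₁ ω, X₂ ω), Y ω))
      = ent p (fun ω => (V ω, X₁ ω, X₂ ω, Y ω)) := by
    exact (ent_comp_inj p (fun ω => ((V ω, X₁ ω, X₂ ω), Y ω))
      (fun z : (𝒱 × 𝒳₁ × 𝒳₂) × 𝒴 => (z.1.1, z.1.2.1, z.1.2.2, z.2))
      (by rintro ⟨⟨a, b, c⟩, d⟩ ⟨⟨a', b', c'⟩, d'⟩ h; simp_all [Prod.ext_iff])).symm
  have e2 : ent p (fun ω => ((V ω, X₁ ω, X₂ ω), S ω))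
      = ent p (fun ω => (V ω, S ω, X₁ ω, X₂ ω)) := by
    exact (ent_comp_inj p (fun ω => ((V ω, X₁ ω, X₂ ω), S ω))
      (fun z : (𝒱 × 𝒳₁ × 𝒳₂) × 𝒮 => (z.1.1, z.2, z.1.2.1, z.1.2.2))
      (by rintro ⟨⟨a, b, c⟩, d⟩ ⟨⟨a', b', c'⟩, d'⟩ h; simp_all [Prod.ext_iff])).symm
  have e3 : ent p (fun ω => ((X₁ ω, X₂ ω), Y ω))
      = ent p (fun ω => (X₁ ω, X₂ ω, Y ω)) := by
    exact (ent_comp_inj p (fun ω => ((X₁ ω, X₂ ω), Y ω))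
      (fun z : (𝒳₁ × 𝒳₂) × 𝒴 => (z.1.1, z.1.2, z.2))
      (by rintro ⟨⟨a, b⟩, d⟩ ⟨⟨a', b'⟩, d'⟩ h; simp_all [Prod.ext_iff])).symm
  have e4 : ent p (fun ω => (Y ω, S ω, X₁ ω, X₂ ω))
      = ent p (fun ω => (S ω, X₁ ω, X₂ ω, Y ω)) := by
    exact (ent_comp_inj p (fun ω => (Y ω, S ω, X₁ ω, X₂ ω))
      (fun z : 𝒴 × 𝒮 × 𝒳₁ × 𝒳₂ => (z.2.1, z.2.2.1, z.2.2.2, z.1))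
      (by rintro ⟨a, b, c, d⟩ ⟨a', b', c', d'⟩ h; simp_all [Prod.ext_iff])).symm
  have e5 : ent p (fun ω => (V ω, Y ω, S ω, X₁ ω, X₂ ω))
      = ent p (fun ω => (V ω, S ω, X₁ ω, X₂ ω, Y ω)) := by
    exact (ent_comp_inj p (fun ω => (V ω, Y ω, S ω, X₁ ω, X₂ ω))
      (fun z : 𝒱 × 𝒴 × 𝒮 × 𝒳₁ × 𝒳₂ => (z.1, z.2.2.1, z.2.2.2.1, z.2.2.2.2, z.2.1))
      (by rintro ⟨a, b, c, d, e⟩ ⟨a', b', c', d', e'⟩ h; simp_all [Prod.ext_iff])).symm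
  have e6 : ent p (fun ω => ((X₁ ω, X₂ ω), S ω))
      = ent p (fun ω => (S ω, X₁ ω, X₂ ω)) := by
    exact (ent_comp_inj p (fun ω => ((X₁ ω, X₂ ω), S ω))
      (fun z : (𝒳₁ × 𝒳₂) × 𝒮 => (z.2, z.1.1, z.1.2))
      (by rintro ⟨⟨a, b⟩, d⟩ ⟨⟨a', b'⟩, d'⟩ h; simp_all [Prod.ext_iff])).symm
  have hind : ent p (fun ω => ((X₁ ω, X₂ ω), S ω))
      = ent p (fun ω => (X₁ ω, X₂ ω)) + ent p S :=
    ent_pair_indep p hp (fun ω => (X₁ ω, X₂ ω)) S hIndep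
  have h10 : ent p (fun ω => (S ω, X₁ ω, X₂ ω))
      = ent p (fun ω => (X₁ ω, X₂ ω)) + ent p S := by rw [← e6]; exact hind
  simp only [cmi] at hMarkov
  rw [e4, e5] at hMarkov
  have heq : mi p (fun ω => (V ω, X₁ ω, X₂ ω)) Y - mi p (fun ω => (V ω, X₁ ω, X₂ ω)) S
      = mi p (fun ω => (X₁ ω, X₂ ω)) Y - cmi p V S (fun ω => (X₁ ω, X₂ ω, Y ω)) := by
    simp only [mi, cmi]
    rw [e1, e2, e3]
    linarith [hMarkov, h10]
  refine ⟨heq, ?_⟩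
  have hnn : 0 ≤ cmi p V S (fun ω => (X₁ ω, X₂ ω, Y ω)) :=
    cmi_nonneg_ent p hp V S (fun ω => (X₁ ω, X₂ ω, Y ω))
  linarith [heq, hnn]
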